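/- arXiv:1708.03790 — 3 statements merged into one kernel-verified Lean document; each statement's English description precedes it below -/
import Mathlib

section
/- For all integers n > l, all 0 < α < 1, and all m ≥ n+1, there is a constant C (depending only on α) with |Λ^{-α}(m−n) − Λ^{-α}(m−l)| ≤ C (n−l) / (m−n)^{2−α}. -/
open scoped BigOperators

/-- `Lam α m` is the kernel `Λ^{-α}(m) = α(α+1)⋯(α+m-1)/m!`, with `Lam α 0 = 1`. -/
noncomputable def Lam (α : ℝ) (m : ℕ) : ℝ :=
  (∏ i ∈ Finset.range m, (α + i)) / (Nat.factorial m)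

lemma Lam_succ (α : ℝ) (k : ℕ) :
    Lam α (k + 1) = Lam α k * ((α + k) / (k + 1)) := by
  unfold Lam
  rw [Finset.prod_range_succ, Nat.factorial_succ]
  have h1 : ((Nat.factorial k : ℝ)) ≠ 0 := by positivity
  have h2 : ((k : ℝ) + 1) ≠ 0 := by positivity
  push_cast
  rw [div_mul_div_comm]
  ring

lemma Lam_pos (α : ℝ) (h0 : 0 < α) (k : ℕ) : 0 < Lam α k := by
  unfold Lam
  apply div_pos
  · exact Finset.prod_pos fun i _ => by positivity
  · positivity

lemma core_ineq (α : ℝ) (h0 : 0 < α) (h1 : α < 1) (t : ℝ) (ht : 1 ≤ t) :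
    (t - (1 - α)) * (t + 1) ^ (1 - α) ≤ t * t ^ (1 - α) := by
  set β := 1 - α with hβ
  have hβ0 : 0 ≤ β := by linarith
  have hβ1 : β ≤ 1 := by linarith
  have ht0 : (0 : ℝ) < t := by linarith
  have hber : (1 + 1 / t) ^ β ≤ 1 + β * (1 / t) :=
    rpow_one_add_le_one_add_mul_self (((by norm_num : (-1:ℝ) ≤ 0)).trans (by positivity)) hβ0 hβ1
  have hsplit : (t + 1) ^ β = t ^ β * (1 + 1 / t) ^ β := by
    rw [← Real.mul_rpow (le_of_lt ht0) (by positivity)]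
    rw [mul_add, mul_one, mul_one_div, div_self ht0.ne']
  rw [hsplit]
  have htβ : (0 : ℝ) < t ^ β := Real.rpow_pos_of_pos ht0 β
  have htβ' : t - β ≥ 0 := by linarith
  calc (t - β) * (t ^ β * (1 + 1 / t) ^ β)
      ≤ (t - β) * (t ^ β * (1 + β * (1 / t))) := by
        apply mul_le_mul_of_nonneg_left _ htβ'
        exact mul_le_mul_of_nonneg_left hber htβ.le
    _ ≤ t * t ^ β := by
        rw [show (t - β) * (t ^ β * (1 + β * (1 / t))) = t ^ β * ((t - β) * (t + β) / t) by
          field_simp]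
        rw [mul_comm t (t ^ β)]
        apply mul_le_mul_of_nonneg_left _ htβ.le
        rw [div_le_iff₀ ht0]
        nlinarith [sq_nonneg β]

lemma Lam_le (α : ℝ) (h0 : 0 < α) (h1 : α < 1) (k : ℕ) :
    Lam α k ≤ ((k : ℝ) + 1) ^ (α - 1) := by
  induction k with
  | zero => simp [Lam]
  | succ k ih =>
    rw [Lam_succ]
    have hk1 : (0 : ℝ) < (k : ℝ) + 1 := by positivity
    have hk2 : (0 : ℝ) < (k : ℝ) + 2 := by positivity
    have hfac : (0 : ℝ) ≤ (α + k) / (k + 1) := by positivity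
    have step1 : Lam α k * ((α + k) / (k + 1)) ≤
        ((k : ℝ) + 1) ^ (α - 1) * ((α + k) / (k + 1)) :=
      mul_le_mul_of_nonneg_right ih hfac
    refine step1.trans ?_
    push_cast
    -- goal: (k+1)^(α-1) * ((α+k)/(k+1)) ≤ (k+1+1)^(α-1)
    set t : ℝ := (k : ℝ) + 1 with hts
    have ht : 1 ≤ t := by simp [hts]
    have ht0 : (0 : ℝ) < t := by linarith
    have key := core_ineq α h0 h1 t ht
    have h2 : (0 : ℝ) < (t + 1) ^ (1 - α) := Real.rpow_pos_of_pos (by linarith) _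
    have h3 : (0 : ℝ) < t ^ (1 - α) := Real.rpow_pos_of_pos ht0 _
    have e1 : t ^ (α - 1) = (t ^ (1 - α))⁻¹ := by
      rw [← Real.rpow_neg ht0.le]; ring_nf
    have e2 : (t + 1) ^ (α - 1) = ((t + 1) ^ (1 - α))⁻¹ := by
      rw [← Real.rpow_neg (by linarith)]; ring_nf
    have hgoal : t ^ (α - 1) * ((α + k) / (k + 1)) ≤ (t + 1) ^ (α - 1) := by
      rw [e1, e2]
      have hαk : α + (k : ℝ) = t - (1 - α) := by rw [hts]; ring
      rw [hαk]
      rw [inv_mul_eq_div, div_div, ← one_div]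
      rw [div_le_div_iff₀ (by positivity) h2]
      calc (t - (1 - α)) * (t + 1) ^ (1 - α) ≤ t * t ^ (1 - α) := key
        _ = 1 * (t ^ (1 - α) * t) := by ring
        _ = 1 * ((↑k + 1) * t ^ (1 - α)) := by rw [hts]; ring
    exact hgoal

lemma Lam_diff_one (α : ℝ) (k : ℕ) :
    Lam α k - Lam α (k + 1) = Lam α k * ((1 - α) / (k + 1)) := by
  rw [Lam_succ]
  have h2 : ((k : ℝ) + 1) ≠ 0 := by positivity
  field_simp
  ring

lemma Lam_anti (α : ℝ) (h0 : 0 < α) (h1 : α < 1) (k : ℕ) :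
    Lam α (k + 1) ≤ Lam α k := by
  have := Lam_diff_one α k
  have hp := Lam_pos α h0 k
  have hf : 0 ≤ (1 - α) / ((k : ℝ) + 1) :=
    div_nonneg (by linarith) (by positivity)
  nlinarith

lemma Lam_step_bound (α : ℝ) (h0 : 0 < α) (h1 : α < 1) (k : ℕ) :
    Lam α k - Lam α (k + 1) ≤ (1 - α) * ((k : ℝ) + 1) ^ (α - 2) := by
  rw [Lam_diff_one]
  have hk1 : (0 : ℝ) < (k : ℝ) + 1 := by positivity
  have hle := Lam_le α h0 h1 k
  have hf : 0 ≤ (1 - α) / ((k : ℝ) + 1) :=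
    div_nonneg (by linarith) (by positivity)
  calc Lam α k * ((1 - α) / ((k : ℝ) + 1))
      ≤ ((k : ℝ) + 1) ^ (α - 1) * ((1 - α) / ((k : ℝ) + 1)) :=
        mul_le_mul_of_nonneg_right hle hf
    _ = (1 - α) * (((k : ℝ) + 1) ^ (α - 1) / ((k : ℝ) + 1)) := by ring
    _ = (1 - α) * ((k : ℝ) + 1) ^ (α - 2) := by
        have e : ((k : ℝ) + 1) ^ (α - 1) = ((k : ℝ) + 1) ^ (α - 2) * ((k : ℝ) + 1) := by
          rw [← Real.rpow_add_one hk1.ne']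
          congr 1
          ring
        rw [e]
        field_simp

lemma Lam_tele (α : ℝ) (h0 : 0 < α) (h1 : α < 1) (k d : ℕ) :
    Lam α k - Lam α (k + d) ≤ (d : ℝ) * (1 - α) * ((k : ℝ) + 1) ^ (α - 2) := by
  induction d with
  | zero => simp
  | succ d ih =>
    have hstep := Lam_step_bound α h0 h1 (k + d)
    have hmono : ((k : ℝ) + (d : ℝ) + 1) ^ (α - 2) ≤ ((k : ℝ) + 1) ^ (α - 2) := by
      rw [Real.rpow_le_rpow_iff_of_neg (by positivity) (by positivity) (by linarith)]
      have : (0 : ℝ) ≤ (d : ℝ) := Nat.cast_nonneg d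
      linarith
    have hpos : (0 : ℝ) < ((k : ℝ) + 1) ^ (α - 2) := Real.rpow_pos_of_pos (by positivity) _
    have hcast : ((k + d : ℕ) : ℝ) + 1 = (k : ℝ) + (d : ℝ) + 1 := by push_cast; ring
    rw [hcast] at hstep
    have : Lam α k - Lam α (k + (d + 1)) =
        (Lam α k - Lam α (k + d)) + (Lam α (k + d) - Lam α (k + d + 1)) := by
      rw [show k + (d + 1) = k + d + 1 by ring]; ring
    rw [this]
    push_cast
    nlinarith

lemma Lam_antitone (α : ℝ) (h0 : 0 < α) (h1 : α < 1) (k d : ℕ) :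
    Lam α (k + d) ≤ Lam α k := by
  induction d with
  | zero => simp
  | succ d ih => exact le_trans (Lam_anti α h0 h1 (k + d)) ih

/-- For `0 < α < 1` there is `C > 0` (depending only on `α`) such that for all integers
`n > l` and `m ≥ n + 1`, `|Λ^{-α}(m−n) − Λ^{-α}(m−l)| ≤ C (n−l) / (m−n)^{2−α}`. -/
theorem lam_diff_bound (α : ℝ) (h0 : 0 < α) (h1 : α < 1) :
    ∃ C > 0, ∀ n l m : ℤ, l < n → n + 1 ≤ m →
      |Lam α (m - n).toNat - Lam α (m - l).toNat| ≤
        C * ((n : ℝ) - l) / ((m : ℝ) - n) ^ (2 - α) := by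
  refine ⟨1, one_pos, fun n l m hln hnm => ?_⟩
  set k : ℕ := (m - n).toNat with hk
  set d : ℕ := (n - l).toNat with hd
  have hmn : (1 : ℤ) ≤ m - n := by omega
  have hnl : (1 : ℤ) ≤ n - l := by omega
  have hkval : (m - n : ℤ) = (k : ℤ) := (Int.toNat_of_nonneg (by omega)).symm
  have hdval : (n - l : ℤ) = (d : ℤ) := (Int.toNat_of_nonneg (by omega)).symm
  have hk1 : 1 ≤ k := by omega
  have hd1 : 1 ≤ d := by omega
  have hsum : (m - l).toNat = k + d := by omega
  have hcastk : ((m : ℝ) - n) = (k : ℝ) := by exact_mod_cast hkval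
  have hcastd : ((n : ℝ) - l) = (d : ℝ) := by exact_mod_cast hdval
  rw [hsum, hcastk, hcastd]
  have habs : |Lam α k - Lam α (k + d)| = Lam α k - Lam α (k + d) :=
    abs_of_nonneg (by linarith [Lam_antitone α h0 h1 k d])
  rw [habs]
  have hkr : (1 : ℝ) ≤ (k : ℝ) := by exact_mod_cast hk1
  have hkpos : (0 : ℝ) < (k : ℝ) := by linarith
  have htele := Lam_tele α h0 h1 k d
  have hmono : ((k : ℝ) + 1) ^ (α - 2) ≤ (k : ℝ) ^ (α - 2) := by
    rw [Real.rpow_le_rpow_iff_of_neg (by positivity) hkpos (by linarith)]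
    linarith
  have hrw : (k : ℝ) ^ (α - 2) = ((k : ℝ) ^ (2 - α))⁻¹ := by
    rw [show (α - 2) = -(2 - α) by ring, Real.rpow_neg hkpos.le]
  have hdpos : (0 : ℝ) < (d : ℝ) := by exact_mod_cast hd1
  have h2 : (0 : ℝ) < ((k : ℝ) + 1) ^ (α - 2) := Real.rpow_pos_of_pos (by positivity) _
  calc Lam α k - Lam α (k + d) ≤ (d : ℝ) * (1 - α) * ((k : ℝ) + 1) ^ (α - 2) := htele
    _ ≤ (d : ℝ) * 1 * ((k : ℝ) ^ (2 - α))⁻¹ := by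
        rw [← hrw]
        have h3 : (d : ℝ) * (1 - α) ≤ (d : ℝ) * 1 := by nlinarith
        have h4 : (0 : ℝ) ≤ (d : ℝ) * (1 - α) := by nlinarith
        nlinarith [hmono, h2]
    _ = 1 * (d : ℝ) / (k : ℝ) ^ (2 - α) := by ring
end

section
/- For α, β ∈ ℝ and u : ℤ_h → ℝ such that all series involved converge absolutely, the composition identity (δ_right)^{α}((δ_right)^{β} u)(nh) = (δ_right)^{α+β} u(nh) holds for every n ∈ ℤ. -/
open scoped BigOperators

lemma desc_smeval_eq_prod (r : ℝ) (m : ℕ) :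
    (descPochhammer ℤ m).smeval r = ∏ i ∈ Finset.range m, (r - i) := by
  induction m with
  | zero => simp [Polynomial.smeval_one]
  | succ n ih =>
    rw [descPochhammer_succ_right, Polynomial.smeval_mul, ih, Finset.prod_range_succ]
    simp [Polynomial.smeval_sub, Polynomial.smeval_X, Polynomial.smeval_natCast]

lemma prod_neg (x : ℝ) (m : ℕ) :
    ∏ i ∈ Finset.range m, (x + i) = (-1 : ℝ) ^ m * ∏ i ∈ Finset.range m, (-x - i) := by
  induction m with
  | zero => simp
  | succ n ih =>
    rw [Finset.prod_range_succ, Finset.prod_range_succ, ih, pow_succ]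
    ring

lemma prod_vandermonde (x y : ℝ) (m : ℕ) :
    ∏ i ∈ Finset.range m, (x + y + i) =
      ∑ ij ∈ Finset.HasAntidiagonal.antidiagonal m, (m.choose ij.1 : ℝ) *
        ((∏ i ∈ Finset.range ij.1, (x + i)) * ∏ i ∈ Finset.range ij.2, (y + i)) := by
  have hd := Ring.descPochhammer_smeval_add (R := ℝ) (r := -x) (s := -y) m (Commute.all _ _)
  have hneg : -x + -y = -(x + y) := by ring
  rw [hneg] at hd
  rw [desc_smeval_eq_prod] at hd
  rw [prod_neg (x + y) m, hd, Finset.mul_sum]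
  refine Finset.sum_congr rfl fun ij hij => ?_
  have hm : ij.1 + ij.2 = m := Finset.HasAntidiagonal.mem_antidiagonal.mp hij
  rw [desc_smeval_eq_prod, desc_smeval_eq_prod, prod_neg x ij.1, prod_neg y ij.2]
  rw [← hm, pow_add]
  ring

lemma Lam_antidiagonal (x y : ℝ) (m : ℕ) :
    ∑ ij ∈ Finset.HasAntidiagonal.antidiagonal m, Lam x ij.1 * Lam y ij.2 = Lam (x + y) m := by
  rw [Lam, prod_vandermonde, Finset.sum_div]
  refine Finset.sum_congr rfl fun ij hij => ?_
  have hm := Finset.HasAntidiagonal.mem_antidiagonal.mp hij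
  have hle : ij.1 ≤ m := Nat.le.intro hm
  have hfac : (m.choose ij.1 : ℝ) * (ij.1.factorial * ij.2.factorial) = m.factorial := by
    have := Nat.choose_mul_factorial_mul_factorial hle
    rw [show m - ij.1 = ij.2 by omega] at this
    rw [mul_assoc] at this
    exact_mod_cast this
  have hM : (m.factorial : ℝ) ≠ 0 := Nat.cast_ne_zero.mpr (Nat.factorial_ne_zero _)
  rw [Lam, Lam, div_mul_div_comm]
  rw [div_eq_div_iff (by positivity) hM]
  rw [← hfac]
  ring

/-- Composition: `(δ_right)^{α}((δ_right)^{β}u) = (δ_right)^{α+β}u` whenever all the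
series involved converge absolutely. Here `u n` is the value of `u` at `nh`. -/
theorem fractional_composition (α β : ℝ) (h : ℝ) (hh : 0 < h) (u : ℤ → ℝ)
    (habs : ∀ n : ℤ, Summable (fun q : ℕ × ℕ => |Lam (-α) q.1 * Lam (-β) q.2 * u (n + q.1 + q.2)|))
    (habs' : ∀ n : ℤ, Summable (fun j : ℕ => |Lam (-(α + β)) j * u (n + j)|)) :
    ∀ n : ℤ,
      h ^ (-α) * ∑' j : ℕ, Lam (-α) j *
          (h ^ (-β) * ∑' k : ℕ, Lam (-β) k * u (n + j + k)) =
        h ^ (-(α + β)) * ∑' j : ℕ, Lam (-(α + β)) j * u (n + j) := by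
  intro n
  set f : ℕ × ℕ → ℝ := fun q => Lam (-α) q.1 * Lam (-β) q.2 * u (n + q.1 + q.2) with hf_def
  have hf : Summable f := summable_abs_iff.mp (habs n)
  have step1 : ∀ j : ℕ, Lam (-α) j * (h ^ (-β) * ∑' k : ℕ, Lam (-β) k * u (n + j + k)) =
      h ^ (-β) * ∑' k : ℕ, f (j, k) := by
    intro j
    rw [mul_left_comm, ← tsum_mul_left]
    congr 1
    refine tsum_congr fun k => ?_
    simp only [hf_def]
    ring
  simp only [step1]
  rw [tsum_mul_left, ← mul_assoc, ← Real.rpow_add hh, ← neg_add]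
  congr 1
  rw [← Summable.tsum_prod' hf (fun b => hf.prod_factor b),
    ← Finset.HasAntidiagonal.sigmaAntidiagonalEquivProd.tsum_eq f,
    Summable.tsum_sigma' (f := fun p : (Σ m : ℕ, (Finset.HasAntidiagonal.antidiagonal m : Finset (ℕ × ℕ))) =>
        f (Finset.HasAntidiagonal.sigmaAntidiagonalEquivProd p))
      (fun m => (hasSum_fintype _).summable)
      (Finset.HasAntidiagonal.sigmaAntidiagonalEquivProd.summable_iff.mpr hf)]
  refine tsum_congr fun m => ?_
  rw [tsum_fintype]
  have hsum : ∑ c : (Finset.HasAntidiagonal.antidiagonal m : Finset (ℕ × ℕ)),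
      f (Finset.HasAntidiagonal.sigmaAntidiagonalEquivProd ⟨m, c⟩) =
      ∑ ij ∈ Finset.HasAntidiagonal.antidiagonal m, f ij := by
    rw [← Finset.sum_finset_coe (fun ij => f ij) (Finset.HasAntidiagonal.antidiagonal m)]
    rfl
  rw [hsum]
  have key : ∀ ij ∈ Finset.HasAntidiagonal.antidiagonal m, f ij =
      Lam (-α) ij.1 * Lam (-β) ij.2 * u (n + m) := by
    intro ij hij
    have hm := Finset.HasAntidiagonal.mem_antidiagonal.mp hij
    simp only [hf_def]
    congr 2
    push_cast [← hm]
    ring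
  rw [Finset.sum_congr rfl key, ← Finset.sum_mul, Lam_antidiagonal, neg_add]
end

section
/- For 0 < α < 1 and integers n > l, the telescoping expansion ∑_{m=n}^∞ (Λ^{-α}(m−n) − Λ^{-α}(m−l)) = ∑_{k=0}^{n-l-1} (n−l−k) Λ^{-(α-1)}(k) holds, and this equals ∑_{m=l}^{n-1} Λ^{-α}(m−l). -/
open scoped BigOperators

lemma lam_pos {α : ℝ} (h0 : 0 < α) (m : ℕ) : 0 < Lam α m := by
  apply div_pos
  · exact Finset.prod_pos fun i _ => by positivity
  · exact_mod_cast Nat.factorial_pos m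

lemma lam_succ (α : ℝ) (m : ℕ) : Lam α (m + 1) = Lam α m * ((α + m) / (m + 1)) := by
  have h1 : ((Nat.factorial m : ℝ)) ≠ 0 := by exact_mod_cast (Nat.factorial_pos m).ne'
  have h2 : ((m : ℝ) + 1) ≠ 0 := by positivity
  simp only [Lam, Finset.prod_range_succ, Nat.factorial_succ]
  rw [div_mul_div_comm]
  congr 1
  push_cast
  ring

lemma lam_diff (α : ℝ) (m : ℕ) : Lam α (m + 1) - Lam α m = Lam (α - 1) (m + 1) := by
  have h1 : ((Nat.factorial m : ℝ)) ≠ 0 := by exact_mod_cast (Nat.factorial_pos m).ne'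
  have h2 : ((m : ℝ) + 1) ≠ 0 := by positivity
  have h3 : ∏ i ∈ Finset.range (m + 1), (α - 1 + i) = (∏ i ∈ Finset.range m, (α + i)) * (α - 1) := by
    rw [Finset.prod_range_succ']
    congr 1
    · exact Finset.prod_congr rfl fun i _ => by push_cast; ring
    · norm_num
  simp only [Lam, Finset.prod_range_succ, Nat.factorial_succ, h3]
  push_cast
  field_simp
  ring

lemma sum_lam (α : ℝ) (d : ℕ) : ∑ k ∈ Finset.range (d + 1), Lam (α - 1) k = Lam α d := by
  induction d with
  | zero => simp [Lam]
  | succ n ih =>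
    rw [Finset.sum_range_succ, ih, ← lam_diff]
    ring

lemma finite_id (α : ℝ) (d : ℕ) :
    ∑ k ∈ Finset.range d, ((d : ℝ) - k) * Lam (α - 1) k = ∑ k ∈ Finset.range d, Lam α k := by
  induction d with
  | zero => simp
  | succ n ih =>
    push_cast
    have expand : ∑ k ∈ Finset.range (n + 1), ((n + 1 : ℝ) - k) * Lam (α - 1) k
        = (∑ k ∈ Finset.range (n + 1), ((n : ℝ) - k) * Lam (α - 1) k)
          + ∑ k ∈ Finset.range (n + 1), Lam (α - 1) k := by
      rw [← Finset.sum_add_distrib]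
      apply Finset.sum_congr rfl; intro k _; push_cast; ring
    have drop : ∑ k ∈ Finset.range (n + 1), ((n : ℝ) - k) * Lam (α - 1) k
        = ∑ k ∈ Finset.range n, ((n : ℝ) - k) * Lam (α - 1) k := by
      rw [Finset.sum_range_succ]; simp
    rw [expand, drop, ih, sum_lam, Finset.sum_range_succ]

lemma lam_monotone {α : ℝ} (h0 : 0 < α) (h1 : α < 1) (m : ℕ) :
    Lam α (m + 1) ≤ Lam α m := by
  rw [lam_succ]
  have hp := lam_pos h0 m
  have hfac : (α + m) / (m + 1) ≤ 1 := by
    rw [div_le_one (by positivity)]; linarith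
  nlinarith [lam_pos h0 m]

lemma lam_le_of_le {α : ℝ} (h0 : 0 < α) (h1 : α < 1) {m n : ℕ} (h : m ≤ n) :
    Lam α n ≤ Lam α m := by
  induction n with
  | zero => simp_all
  | succ k ih =>
    rcases Nat.lt_or_ge m (k + 1) with h' | h'
    · exact le_trans (lam_monotone h0 h1 k) (ih (Nat.lt_succ_iff.mp h'))
    · have : m = k + 1 := le_antisymm h h'
      simp [this]

lemma lam_le_exp {α : ℝ} (h0 : 0 < α) (N : ℕ) :
    Lam α N ≤ Real.exp ((α - 1) * ∑ j ∈ Finset.range N, (1 : ℝ) / (j + 1)) := by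
  induction N with
  | zero => simp [Lam]
  | succ n ih =>
    rw [lam_succ, Finset.sum_range_succ, mul_add, Real.exp_add]
    have hfac : (α + n) / (n + 1) ≤ Real.exp ((α - 1) * (1 / (n + 1))) := by
      have h := Real.add_one_le_exp ((α - 1) * (1 / ((n : ℝ) + 1)))
      have : (α + n) / (n + 1) = (α - 1) * (1 / ((n : ℝ) + 1)) + 1 := by
        field_simp
        ring
      linarith
    have h1 : (0 : ℝ) ≤ (α + n) / (n + 1) := by positivity
    have h2 : 0 < Lam α n := lam_pos h0 n
    calc Lam α n * ((α + n) / (n + 1))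
        ≤ Real.exp ((α - 1) * ∑ j ∈ Finset.range n, (1 : ℝ) / (j + 1)) * ((α + n) / (n + 1)) := by
          apply mul_le_mul_of_nonneg_right ih h1
      _ ≤ _ := by
          apply mul_le_mul_of_nonneg_left hfac (Real.exp_nonneg _)

lemma lam_tendsto_zero {α : ℝ} (h0 : 0 < α) (h1 : α < 1) :
    Filter.Tendsto (Lam α) Filter.atTop (nhds 0) := by
  have hH := Real.tendsto_sum_range_one_div_nat_succ_atTop
  have hbot : Filter.Tendsto (fun N : ℕ => (α - 1) * ∑ j ∈ Finset.range N, (1 : ℝ) / (j + 1))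
      Filter.atTop Filter.atBot := by
    apply Filter.Tendsto.const_mul_atTop_of_neg (by linarith) hH
  have hexp : Filter.Tendsto
      (fun N : ℕ => Real.exp ((α - 1) * ∑ j ∈ Finset.range N, (1 : ℝ) / (j + 1)))
      Filter.atTop (nhds 0) := Real.tendsto_exp_atBot.comp hbot
  apply squeeze_zero (fun n => (lam_pos h0 n).le) (fun n => lam_le_exp h0 n) hexp

lemma partial_sum_eq {α : ℝ} (d : ℕ) (N : ℕ) :
    ∑ j ∈ Finset.range N, (Lam α j - Lam α (j + d))
      = ∑ k ∈ Finset.range d, Lam α k - ∑ t ∈ Finset.range d, Lam α (N + t) := by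
  induction N with
  | zero => simp
  | succ n ih =>
    rw [Finset.sum_range_succ, ih]
    have key : ∑ t ∈ Finset.range d, Lam α (n + t) - ∑ t ∈ Finset.range d, Lam α (n + 1 + t)
        = Lam α n - Lam α (n + d) := by
      cases d with
      | zero => simp
      | succ e =>
        rw [Finset.sum_range_succ' (fun t => Lam α (n + t)), Finset.sum_range_succ (fun t => Lam α (n + 1 + t))]
        have hs : ∑ t ∈ Finset.range e, Lam α (n + (t + 1)) = ∑ t ∈ Finset.range e, Lam α (n + 1 + t) :=
          Finset.sum_congr rfl fun t _ => by rw [show n + (t + 1) = n + 1 + t from by omega]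
        rw [hs, show n + 1 + e = n + (e + 1) from by omega]
        simp only [Nat.add_zero]
        abel
    linarith [key]

/-- Telescoping expansion: for `0 < α < 1` and `d = n − l ≥ 1`,
`∑_{j=0}^∞ (Λ^{-α}(j) − Λ^{-α}(j+d)) = ∑_{k=0}^{d-1} (d−k) Λ^{-(α-1)}(k)`,
and this equals `∑_{k=0}^{d-1} Λ^{-α}(k)`. -/
theorem lam_telescoping_expansion (α : ℝ) (h0 : 0 < α) (h1 : α < 1) (d : ℕ) (hd : 1 ≤ d) :
    HasSum (fun j : ℕ => Lam α j - Lam α (j + d))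
        (∑ k ∈ Finset.range d, ((d : ℝ) - k) * Lam (α - 1) k) ∧
      ∑ k ∈ Finset.range d, ((d : ℝ) - k) * Lam (α - 1) k = ∑ k ∈ Finset.range d, Lam α k := by
  refine ⟨?_, finite_id α d⟩
  rw [finite_id α d]
  set C : ℝ := ∑ k ∈ Finset.range d, Lam α k with hC
  have hnonneg : ∀ j : ℕ, 0 ≤ Lam α j - Lam α (j + d) := fun j =>
    sub_nonneg.mpr (lam_le_of_le h0 h1 (Nat.le_add_right j d))
  have hbound : ∀ N : ℕ, ∑ j ∈ Finset.range N, (Lam α j - Lam α (j + d)) ≤ C := by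
    intro N
    rw [partial_sum_eq]
    have : 0 ≤ ∑ t ∈ Finset.range d, Lam α (N + t) :=
      Finset.sum_nonneg fun t _ => (lam_pos h0 _).le
    linarith
  have hsummable : Summable (fun j : ℕ => Lam α j - Lam α (j + d)) :=
    summable_of_sum_range_le hnonneg hbound
  have htend : Filter.Tendsto (fun N => ∑ j ∈ Finset.range N, (Lam α j - Lam α (j + d)))
      Filter.atTop (nhds C) := by
    have htail : Filter.Tendsto (fun N : ℕ => ∑ t ∈ Finset.range d, Lam α (N + t))
        Filter.atTop (nhds 0) := by
      have : Filter.Tendsto (fun N : ℕ => ∑ t ∈ Finset.range d, Lam α (N + t))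
          Filter.atTop (nhds (∑ t ∈ Finset.range d, (0 : ℝ))) := by
        apply tendsto_finset_sum
        intro t _
        exact (lam_tendsto_zero h0 h1).comp (Filter.tendsto_add_atTop_nat t)
      simpa using this
    have := Filter.Tendsto.sub (tendsto_const_nhds (x := C)) htail
    simp only [sub_zero] at this
    apply this.congr
    intro N
    exact (partial_sum_eq d N).symm
  exact (tendsto_nhds_unique hsummable.hasSum.tendsto_sum_nat htend) ▸ hsummable.hasSum
end
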